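/- Let ν be the uniform probability measure on the equator E = {(cos φ, sin φ, 0) : φ ∈ [0,2π)} of the unit sphere S² in ℝ³. Then for every C ∈ [0,1], g(C,ν) = (2/π) ∫₀^{π/2} √(1 − (1−C²) sin²φ) dφ; in particular g*(ν) = g(0,ν) = 2/π. Moreover, every Borel probability measure μ on S² whose support is contained in the equator E satisfies g(C,μ) ≥ g(C,ν) for all C ∈ [0,1]. -/

import Mathlib

open MeasureTheory Real
open scoped ENNReal

noncomputable section

abbrev E3 := EuclideanSpace ℝ (Fin 3)

/-- The unit sphere S² in ℝ³. -/
def unitSphere : Set E3 := Metric.sphere (0 : E3) 1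

/-- `g C μ` is the supremum over unit vectors `v` of `∫ √(C² + (1−C²)⟨r,v⟩²) dμ(r)`. -/
def g (C : ℝ) (μ : Measure E3) : ℝ :=
  ⨆ v : unitSphere, ∫ r, Real.sqrt (C ^ 2 + (1 - C ^ 2) * (inner ℝ r (v : E3) : ℝ) ^ 2) ∂μ


/-- The point `(cos φ, sin φ, 0)` on the equator of the unit sphere. -/
def eqPt (φ : ℝ) : E3 := (WithLp.equiv 2 (Fin 3 → ℝ)).symm ![Real.cos φ, Real.sin φ, 0]

/-- The uniform probability measure on the equator: the pushforward of the normalized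
Lebesgue measure on `[0, 2π)` under `φ ↦ (cos φ, sin φ, 0)`. -/
def equatorUniform : Measure E3 :=
  Measure.map eqPt ((ENNReal.ofReal (2 * π))⁻¹ • volume.restrict (Set.Ico 0 (2 * π)))

namespace GEquatorAux

lemma norm_eqPt (φ : ℝ) : ‖eqPt φ‖ = 1 := by
  have : ‖eqPt φ‖ = Real.sqrt (Real.cos φ ^ 2 + (Real.sin φ ^ 2 + 0)) := by
    simp [eqPt, EuclideanSpace.norm_eq, Fin.sum_univ_three, sq]
  rw [this]
  simp [cos_sq_add_sin_sq]

lemma eqPt_mem (φ : ℝ) : eqPt φ ∈ unitSphere := by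
  simp [unitSphere, mem_sphere_zero_iff_norm, norm_eqPt]

lemma inner_eqPt (φ : ℝ) (v : E3) :
    (inner ℝ (eqPt φ) v : ℝ) = Real.cos φ * v 0 + Real.sin φ * v 1 := by
  simp [eqPt, PiLp.inner_apply, Fin.sum_univ_three, RCLike.inner_apply]; ring

lemma continuous_eqPt : Continuous eqPt := by
  apply Continuous.comp
  · exact (PiLp.continuous_toLp 2 (fun _ : Fin 3 => ℝ))
  · exact continuous_pi fun i => by
      fin_cases i <;> simp <;> [exact continuous_cos; exact continuous_sin; exact continuous_const]

lemma sqrt_aux (C t : ℝ) : Real.sqrt (C^2 + (1-C^2) * Real.cos t ^ 2)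
    = Real.sqrt (1 - (1-C^2) * Real.sin t ^ 2) := by
  congr 1
  linear_combination (1 - C^2) * (Real.sin_sq_add_cos_sq t)

lemma shift_int (C ρ ψ : ℝ) :
    (∫ φ in (0:ℝ)..(2*π), Real.sqrt (C^2 + (1-C^2) * (ρ * Real.cos (φ - ψ))^2))
    = ∫ φ in (0:ℝ)..(2*π), Real.sqrt (C^2 + (1-C^2) * (ρ * Real.cos φ)^2) := by
  have hper : Function.Periodic (fun φ => Real.sqrt (C^2 + (1-C^2) * (ρ * Real.cos φ)^2)) (2*π) :=
    fun x => by simp [Real.cos_add_two_pi]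
  have h1 := intervalIntegral.integral_comp_sub_right
    (fun φ => Real.sqrt (C^2 + (1-C^2) * (ρ * Real.cos φ)^2)) ψ (a := 0) (b := 2*π)
  rw [h1]
  have h2 := hper.intervalIntegral_add_eq (0-ψ) 0
  rw [show (2*π - ψ : ℝ) = -ψ + 2*π by ring, show (0 - ψ : ℝ) = -ψ by ring]
  simpa using h2

lemma quarter_int (C : ℝ) :
    (∫ φ in (0:ℝ)..(2*π), Real.sqrt (1 - (1-C^2) * Real.sin φ ^ 2))
    = 4 * ∫ φ in (0:ℝ)..(π/2), Real.sqrt (1 - (1-C^2) * Real.sin φ ^ 2) := by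
  set G : ℝ → ℝ := fun φ => Real.sqrt (1 - (1-C^2) * Real.sin φ ^ 2) with hG
  have hcont : Continuous G := by fun_prop
  have hint : ∀ a b : ℝ, IntervalIntegrable G volume a b := fun a b =>
    hcont.intervalIntegrable a b
  have hpi : ∀ x, G (x + π) = G x := fun x => by
    simp [hG, Real.sin_add_pi, neg_sq]
  have h1 : (∫ φ in (0:ℝ)..(2*π), G φ) = (∫ φ in (0:ℝ)..π, G φ) + ∫ φ in (π:ℝ)..(2*π), G φ := by
    rw [intervalIntegral.integral_add_adjacent_intervals (hint 0 π) (hint π (2*π))]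
  have h2 : (∫ φ in (π:ℝ)..(2*π), G φ) = ∫ φ in (0:ℝ)..π, G φ := by
    have := intervalIntegral.integral_comp_add_right (a := 0) (b := π) G π
    rw [show (0:ℝ)+π = π by ring, show (π:ℝ)+π = 2*π by ring] at this
    rw [← this]
    simp only [hpi]
  have h3 : (∫ φ in (0:ℝ)..π, G φ) = (∫ φ in (0:ℝ)..(π/2), G φ) + ∫ φ in (π/2:ℝ)..π, G φ := by
    rw [intervalIntegral.integral_add_adjacent_intervals (hint 0 (π/2)) (hint (π/2) π)]
  have h4 : (∫ φ in (π/2:ℝ)..π, G φ) = ∫ φ in (0:ℝ)..(π/2), G φ := by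
    have := intervalIntegral.integral_comp_sub_left (a := 0) (b := π/2) G π
    have hrfl : ∀ x, G (π - x) = G x := fun x => by simp [hG, Real.sin_pi_sub]
    rw [show (π - π/2 : ℝ) = π/2 by ring, show (π - 0 : ℝ) = π by ring] at this
    rw [← this]
    simp only [hrfl]
  rw [h1, h2, h3, h4]; ring

lemma integral_equatorUniform (f : E3 → ℝ) (hf : Continuous f) :
    ∫ r, f r ∂equatorUniform = (2*π)⁻¹ * ∫ φ in (0:ℝ)..(2*π), f (eqPt φ) := by
  rw [equatorUniform, integral_map continuous_eqPt.aemeasurable hf.aestronglyMeasurable,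
    integral_smul_measure]
  have h2π : (0:ℝ) < 2*π := by positivity
  rw [ENNReal.toReal_inv, ENNReal.toReal_ofReal h2π.le]
  rw [intervalIntegral.integral_of_le h2π.le,
    show (∫ x in Set.Ioc (0:ℝ) (2*π), f (eqPt x)) = ∫ x in Set.Ico (0:ℝ) (2*π), f (eqPt x) from
      ((MeasureTheory.integral_Ico_eq_integral_Ioo).trans
        (MeasureTheory.integral_Ioc_eq_integral_Ioo).symm).symm]
  simp [smul_eq_mul]

lemma continuous_integrand (C : ℝ) (v : E3) :
    Continuous fun r : E3 => Real.sqrt (C ^ 2 + (1 - C ^ 2) * (inner ℝ r v : ℝ) ^ 2) := by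
  have : Continuous fun r : E3 => (inner ℝ r v : ℝ) := continuous_id.inner continuous_const
  fun_prop

lemma per_vector (C : ℝ) (hC : C ∈ Set.Icc (0:ℝ) 1) (v : E3) (hv : ‖v‖ = 1) :
    (∫ φ in (0:ℝ)..(2*π), Real.sqrt (C^2 + (1-C^2) * (Real.cos φ * v 0 + Real.sin φ * v 1)^2))
    ≤ ∫ φ in (0:ℝ)..(2*π), Real.sqrt (C^2 + (1-C^2) * (1 * Real.cos φ)^2) := by
  obtain ⟨hC0, hC1⟩ := hC
  have h1C : (0:ℝ) ≤ 1 - C^2 := by nlinarith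
  have h2π : (0:ℝ) ≤ 2*π := by positivity
  have hv2 : v 0 ^ 2 + v 1 ^ 2 ≤ 1 := by
    have h := hv
    rw [EuclideanSpace.norm_eq] at h
    have hs : (∑ i : Fin 3, ‖v i‖ ^ 2) = 1 := by
      have hnn : (0:ℝ) ≤ ∑ i : Fin 3, ‖v i‖ ^ 2 := by positivity
      nlinarith [Real.sq_sqrt hnn, h]
    rw [Fin.sum_univ_three] at hs
    simp only [Real.norm_eq_abs, sq_abs] at hs
    nlinarith [sq_nonneg (v 2)]
  set z : ℂ := Complex.ofReal (v 0) + Complex.ofReal (v 1) * Complex.I with hz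
  by_cases h0 : z = 0
  · have hv0 : v 0 = 0 := by
      have := congrArg Complex.re h0; simpa [hz] using this
    have hv1 : v 1 = 0 := by
      have := congrArg Complex.im h0; simpa [hz] using this
    apply intervalIntegral.integral_mono_on h2π
      (Continuous.intervalIntegrable (by fun_prop) _ _)
      (Continuous.intervalIntegrable (by fun_prop) _ _)
    intro x _
    apply Real.sqrt_le_sqrt
    rw [hv0, hv1]
    nlinarith [sq_nonneg (Real.cos x)]
  · set ρ : ℝ := ‖z‖ with hρ
    set ψ : ℝ := z.arg with hψ
    have hρ0 : ρ ≠ 0 := by simpa [hρ] using (norm_ne_zero_iff.mpr h0)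
    have hre : z.re = v 0 := by simp [hz]
    have him : z.im = v 1 := by simp [hz]
    have hcos : v 0 = ρ * Real.cos ψ := by
      rw [hψ, Complex.cos_arg h0, hre]; field_simp; rw [hρ]
    have hsin : v 1 = ρ * Real.sin ψ := by
      rw [hψ, Complex.sin_arg, him]; field_simp; rw [hρ]
    have hρ2 : ρ^2 ≤ 1 := by
      have : ρ^2 = v 0 ^ 2 + v 1 ^ 2 := by
        rw [hρ, Complex.sq_norm, Complex.normSq_apply, hre, him]; ring
      linarith [this ▸ hv2]
    have hcomb : ∀ φ : ℝ, Real.cos φ * v 0 + Real.sin φ * v 1 = ρ * Real.cos (φ - ψ) := by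
      intro φ
      rw [Real.cos_sub, hcos, hsin]; ring
    calc (∫ φ in (0:ℝ)..(2*π),
            Real.sqrt (C^2 + (1-C^2) * (Real.cos φ * v 0 + Real.sin φ * v 1)^2))
        = ∫ φ in (0:ℝ)..(2*π), Real.sqrt (C^2 + (1-C^2) * (ρ * Real.cos (φ - ψ))^2) := by
          simp only [hcomb]
      _ = ∫ φ in (0:ℝ)..(2*π), Real.sqrt (C^2 + (1-C^2) * (ρ * Real.cos φ)^2) :=
          shift_int C ρ ψ
      _ ≤ ∫ φ in (0:ℝ)..(2*π), Real.sqrt (C^2 + (1-C^2) * (1 * Real.cos φ)^2) := by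
          apply intervalIntegral.integral_mono_on h2π
            (Continuous.intervalIntegrable (by fun_prop) _ _)
            (Continuous.intervalIntegrable (by fun_prop) _ _)
          intro x _
          apply Real.sqrt_le_sqrt
          have : (ρ * Real.cos x)^2 ≤ (1 * Real.cos x)^2 := by
            have := sq_nonneg (Real.cos x)
            nlinarith
          nlinarith

lemma keyF (C : ℝ) :
    (2*π)⁻¹ * (∫ φ in (0:ℝ)..(2*π), Real.sqrt (C^2 + (1-C^2) * (1 * Real.cos φ)^2))
      = (2/π) * ∫ φ in (0:ℝ)..(π/2), Real.sqrt (1 - (1-C^2) * Real.sin φ ^ 2) := by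
  have h1 : (∫ φ in (0:ℝ)..(2*π), Real.sqrt (C^2 + (1-C^2) * (1 * Real.cos φ)^2))
      = ∫ φ in (0:ℝ)..(2*π), Real.sqrt (1 - (1-C^2) * Real.sin φ ^ 2) := by
    refine intervalIntegral.integral_congr fun x _ => ?_
    rw [one_mul, ← sqrt_aux C x]
  rw [h1, quarter_int]
  have hπ : (π:ℝ) ≠ 0 := Real.pi_ne_zero
  field_simp
  ring

lemma norm_unitSphere {v : E3} (hv : v ∈ unitSphere) : ‖v‖ = 1 := by
  simpa [unitSphere, mem_sphere_zero_iff_norm] using hv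

instance : Nonempty unitSphere := ⟨⟨eqPt 0, eqPt_mem 0⟩⟩

lemma part1 (C : ℝ) (hC : C ∈ Set.Icc (0:ℝ) 1) :
    g C equatorUniform
      = (2 / π) * ∫ φ in (0 : ℝ)..(π / 2), Real.sqrt (1 - (1 - C ^ 2) * Real.sin φ ^ 2) := by
  set I := (2 / π) * ∫ φ in (0 : ℝ)..(π / 2), Real.sqrt (1 - (1 - C ^ 2) * Real.sin φ ^ 2) with hI
  have key : ∀ v : unitSphere,
      (∫ r, Real.sqrt (C ^ 2 + (1 - C ^ 2) * (inner ℝ r (v : E3) : ℝ) ^ 2) ∂equatorUniform)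
        = (2*π)⁻¹ * ∫ φ in (0:ℝ)..(2*π),
            Real.sqrt (C^2 + (1-C^2) * (Real.cos φ * (v:E3) 0 + Real.sin φ * (v:E3) 1)^2) := by
    intro v
    rw [integral_equatorUniform _ (continuous_integrand C v)]
    congr 1
    refine intervalIntegral.integral_congr fun x _ => ?_
    rw [inner_eqPt]
  have bound : ∀ v : unitSphere,
      (∫ r, Real.sqrt (C ^ 2 + (1 - C ^ 2) * (inner ℝ r (v : E3) : ℝ) ^ 2) ∂equatorUniform) ≤ I := by
    intro v
    rw [key v, hI, ← keyF C]
    exact mul_le_mul_of_nonneg_left (per_vector C hC (v : E3) (norm_unitSphere v.2))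
      (by positivity)
  have attain :
      (∫ r, Real.sqrt (C ^ 2 + (1 - C ^ 2)
          * (inner ℝ r ((⟨eqPt 0, eqPt_mem 0⟩ : unitSphere) : E3) : ℝ) ^ 2) ∂equatorUniform)
        = I := by
    rw [key ⟨eqPt 0, eqPt_mem 0⟩, hI, ← keyF C]
    congr 1
    refine intervalIntegral.integral_congr fun x _ => ?_
    have h0 : (eqPt 0 : E3) 0 = 1 := by simp [eqPt]
    have h1 : (eqPt 0 : E3) 1 = 0 := by simp [eqPt]
    rw [show ((⟨eqPt 0, eqPt_mem 0⟩ : unitSphere) : E3) = eqPt 0 from rfl, h0, h1]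
    ring_nf
  refine le_antisymm (ciSup_le bound) ?_
  exact le_ciSup_of_le ⟨I, by rintro x ⟨v, rfl⟩; exact bound v⟩ ⟨eqPt 0, eqPt_mem 0⟩ attain.ge

lemma part2 : g 0 equatorUniform = 2 / π := by
  rw [part1 0 ⟨le_refl 0, zero_le_one⟩]
  have h : ∀ x ∈ Set.uIcc (0:ℝ) (π/2),
      Real.sqrt (1 - (1 - (0:ℝ)^2) * Real.sin x ^ 2) = Real.cos x := by
    intro x hx
    rw [Set.uIcc_of_le (by positivity)] at hx
    have hc : 0 ≤ Real.cos x := Real.cos_nonneg_of_mem_Icc ⟨by linarith [hx.1, Real.pi_pos], hx.2⟩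
    have he : (1 - (1 - (0:ℝ)^2) * Real.sin x ^ 2) = Real.cos x ^ 2 := by
      have := Real.sin_sq_add_cos_sq x
      ring_nf
      linarith
    rw [he, Real.sqrt_sq hc]
  rw [intervalIntegral.integral_congr h, integral_cos]
  simp

lemma sqrt_le_one_of (C : ℝ) (hC : C ∈ Set.Icc (0:ℝ) 1) (r v : E3)
    (hr : ‖r‖ = 1) (hv : ‖v‖ = 1) :
    Real.sqrt (C^2 + (1-C^2) * (inner ℝ r v : ℝ)^2) ≤ 1 := by
  obtain ⟨hC0, hC1⟩ := hC
  have h1C : (0:ℝ) ≤ 1 - C^2 := by nlinarith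
  have habs : |(inner ℝ r v : ℝ)| ≤ 1 := by
    calc |(inner ℝ r v : ℝ)| ≤ ‖r‖ * ‖v‖ := abs_real_inner_le_norm r v
    _ = 1 := by rw [hr, hv]; ring
  have hsq : (inner ℝ r v : ℝ)^2 ≤ 1 := (sq_le_one_iff_abs_le_one _).2 habs
  have hle : C^2 + (1-C^2) * (inner ℝ r v : ℝ)^2 ≤ 1 := by nlinarith
  calc Real.sqrt (C^2 + (1-C^2) * (inner ℝ r v : ℝ)^2) ≤ Real.sqrt 1 := Real.sqrt_le_sqrt hle
  _ = 1 := Real.sqrt_one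

lemma part3 (μ : Measure E3) (hμ : IsProbabilityMeasure μ)
    (hsupp : μ (Set.range eqPt)ᶜ = 0)
    (C : ℝ) (hC : C ∈ Set.Icc (0:ℝ) 1) : g C equatorUniform ≤ g C μ := by
  rw [part1 C hC]
  set J := ∫ φ in (0:ℝ)..(π/2), Real.sqrt (1 - (1-C^2) * Real.sin φ^2) with hJ
  have h2π : (0:ℝ) < 2*π := by positivity
  have haeS : ∀ᵐ r ∂μ, r ∈ Set.range eqPt := by
    exact (MeasureTheory.ae_iff).2 hsupp
  have hBdd : BddAbove (Set.range fun v : unitSphere =>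
      ∫ r, Real.sqrt (C^2 + (1-C^2) * (inner ℝ r (v:E3) : ℝ)^2) ∂μ) := by
    refine ⟨1, ?_⟩
    rintro x ⟨v, rfl⟩
    have hae : ∀ᵐ r ∂μ, ‖Real.sqrt (C^2 + (1-C^2) * (inner ℝ r (v:E3) : ℝ)^2)‖ ≤ 1 := by
      filter_upwards [haeS] with r hr
      obtain ⟨θ, rfl⟩ := hr
      rw [Real.norm_eq_abs, abs_of_nonneg (Real.sqrt_nonneg _)]
      exact sqrt_le_one_of C hC _ _ (norm_eqPt θ) (norm_unitSphere v.2)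
    have hni := norm_integral_le_of_norm_le_const hae
    rw [probReal_univ, mul_one, Real.norm_eq_abs] at hni
    exact (le_abs_self _).trans hni
  set m : Measure ℝ := volume.restrict (Set.Ioc 0 (2*π)) with hm
  haveI : IsFiniteMeasure m :=
    ⟨by rw [hm, Measure.restrict_apply_univ]; exact measure_Ioc_lt_top⟩
  set F : ℝ × E3 → ℝ :=
    fun p => Real.sqrt (C^2 + (1-C^2) * (inner ℝ p.2 (eqPt p.1) : ℝ)^2) with hF
  have hFc : Continuous F := by
    have h1 : Continuous fun p : ℝ × E3 => (inner ℝ p.2 (eqPt p.1) : ℝ) :=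
      (continuous_snd).inner (continuous_eqPt.comp continuous_fst)
    fun_prop
  have hFb : ∀ᵐ p ∂(m.prod μ), ‖F p‖ ≤ 1 := by
    obtain ⟨t, hts, htm, ht0⟩ := exists_measurable_superset_of_null hsupp
    have hprod : (m.prod μ) {p : ℝ × E3 | p.2 ∈ t} = 0 := by
      have he : {p : ℝ × E3 | p.2 ∈ t} = Set.univ ×ˢ t := by ext p; simp
      rw [he, Measure.prod_prod, ht0, mul_zero]
    have hae2 : ∀ᵐ p ∂(m.prod μ), p.2 ∉ t := by
      rw [ae_iff]; simpa using hprod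
    filter_upwards [hae2] with p hp
    have hpS : p.2 ∈ Set.range eqPt := by
      by_contra h
      exact hp (hts h)
    obtain ⟨θ, hθ⟩ := hpS
    rw [Real.norm_eq_abs, abs_of_nonneg (Real.sqrt_nonneg _)]
    exact sqrt_le_one_of C hC p.2 (eqPt p.1) (hθ ▸ norm_eqPt θ) (norm_eqPt p.1)
  have hFint : Integrable F (m.prod μ) :=
    Integrable.mono' (integrable_const 1) hFc.aestronglyMeasurable hFb
  have hswap : (∫ ψ, (∫ r, F (ψ, r) ∂μ) ∂m) = ∫ r, (∫ ψ, F (ψ, r) ∂m) ∂μ :=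
    integral_integral_swap (f := fun ψ r => F (ψ, r)) hFint
  have hval : ∀ r ∈ Set.range eqPt, (∫ ψ, F (ψ, r) ∂m) = 2*π * ((2/π) * J) := by
    rintro r ⟨θ, rfl⟩
    have e1 : (∫ ψ, F (ψ, eqPt θ) ∂m)
        = ∫ ψ in (0:ℝ)..(2*π), Real.sqrt (C^2 + (1-C^2) * (1 * Real.cos (ψ - θ))^2) := by
      rw [hm, ← intervalIntegral.integral_of_le h2π.le]
      refine intervalIntegral.integral_congr fun x _ => ?_
      have hi : (inner ℝ (eqPt θ) (eqPt x) : ℝ) = Real.cos (x - θ) := by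
        rw [inner_eqPt θ (eqPt x)]
        have h0 : (eqPt x : E3) 0 = Real.cos x := by simp [eqPt]
        have h1 : (eqPt x : E3) 1 = Real.sin x := by simp [eqPt]
        rw [h0, h1, Real.cos_sub]; ring
      simp only [hF, hi, one_mul]
    rw [e1, shift_int C 1 θ]
    have hk := keyF C
    have hπ : (π : ℝ) ≠ 0 := Real.pi_ne_zero
    rw [hJ]
    field_simp at hk ⊢
    linarith
  have hAle : ∀ ψ : ℝ, (∫ r, F (ψ, r) ∂μ) ≤ g C μ := by
    intro ψ
    exact le_ciSup hBdd ⟨eqPt ψ, eqPt_mem ψ⟩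
  have hAint : Integrable (fun ψ => ∫ r, F (ψ, r) ∂μ) m := hFint.integral_prod_left
  have hle : (∫ ψ, (∫ r, F (ψ, r) ∂μ) ∂m) ≤ ∫ _ψ : ℝ, (g C μ) ∂m :=
    integral_mono hAint (integrable_const _) hAle
  have hconst : (∫ _ψ : ℝ, (g C μ) ∂m) = 2*π * g C μ := by
    rw [integral_const, hm, measureReal_restrict_apply_univ, Real.volume_real_Ioc]
    rw [sub_zero, max_eq_left h2π.le, smul_eq_mul]
  have hcongr : (∫ r, (∫ ψ, F (ψ, r) ∂m) ∂μ) = 2*π*((2/π)*J) := by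
    rw [integral_congr_ae (g := fun _ => 2*π*((2/π)*J))
      (by filter_upwards [haeS] with r hr; exact hval r hr)]
    simp [measure_univ]
  have hfinal : 2*π*((2/π)*J) ≤ 2*π * g C μ := by
    calc 2*π*((2/π)*J) = ∫ r, (∫ ψ, F (ψ, r) ∂m) ∂μ := hcongr.symm
    _ = ∫ ψ, (∫ r, F (ψ, r) ∂μ) ∂m := hswap.symm
    _ ≤ ∫ _ψ : ℝ, (g C μ) ∂m := hle
    _ = 2*π*g C μ := hconst
  exact le_of_mul_le_mul_left hfinal h2π

end GEquatorAux

open GEquatorAux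

/-- Let `ν` be the uniform probability measure on the equator of the unit sphere S² of ℝ³.
Then for every `C ∈ [0,1]`, `g(C,ν) = (2/π)∫₀^{π/2} √(1 − (1−C²)sin²φ) dφ`; in particular
`g*(ν) = g(0,ν) = 2/π`.  Moreover, every Borel probability measure `μ` supported on the
equator satisfies `g(C,μ) ≥ g(C,ν)` for all `C ∈ [0,1]`. -/
theorem g_equator :
    (∀ C ∈ Set.Icc (0 : ℝ) 1,
      g C equatorUniform
        = (2 / π) * ∫ φ in (0 : ℝ)..(π / 2), Real.sqrt (1 - (1 - C ^ 2) * Real.sin φ ^ 2)) ∧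
    g 0 equatorUniform = 2 / π ∧
    (∀ μ : Measure E3, IsProbabilityMeasure μ → μ (Set.range eqPt)ᶜ = 0 →
      ∀ C ∈ Set.Icc (0 : ℝ) 1, g C equatorUniform ≤ g C μ) :=
  ⟨part1, part2, part3⟩
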